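/- Let p be a prime, let n, k, l be positive integers with l | k, set d = gcd(n,k), e = gcd(n,l), L = lcm(d,l), and suppose p does not divide k/L. Let a ∈ 𝔽_{p^n}. Then the equation T_l^k(X) = a has a solution in 𝔽_{p^n} if and only if S_e^{2e}(T_d^n(a)) = 0. Moreover, in that case, for any δ ∈ 𝔽_{p^n} with T_d^n(δ) = 1 and any δ₁ ∈ 𝔽_{p^d} with T_e^d(δ₁) = 1, setting y₀ = Σ_{i=0}^{n/d−2} Σ_{j=i+1}^{n/d−1} δ^{p^{kj}} (S_l^{2l}(a))^{p^{ki}}, the element x₀ = y₀ + (L/k)·(a − T_l^k(y₀))·δ₁ lies in 𝔽_{p^n} and satisfies T_l^k(x₀) = a, where L/k denotes the element (k/L)^{−1} in 𝔽_p. -/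

import Mathlib

open Finset

/-- `Tmap p u v x = Σ_{i=0}^{v/u - 1} x^{p^{u i}}` on the algebraic closure of `𝔽_p`. -/
noncomputable def Tmap (p : ℕ) [Fact p.Prime] (u v : ℕ) (x : AlgebraicClosure (ZMod p)) :
    AlgebraicClosure (ZMod p) :=
  ∑ i ∈ Finset.range (v / u), x ^ p ^ (u * i)

/-- `Smap p u v x = Σ_{i=0}^{v/u - 1} (-1)^i x^{p^{u i}}` on the algebraic closure of `𝔽_p`. -/
noncomputable def Smap (p : ℕ) [Fact p.Prime] (u v : ℕ) (x : AlgebraicClosure (ZMod p)) :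
    AlgebraicClosure (ZMod p) :=
  ∑ i ∈ Finset.range (v / u), (-1 : AlgebraicClosure (ZMod p)) ^ i * x ^ p ^ (u * i)

/-- `Ffield p m` is the subfield `𝔽_{p^m} = {x : x^{p^m} = x}` of the algebraic closure of `𝔽_p`. -/
def Ffield (p : ℕ) [Fact p.Prime] (m : ℕ) : Set (AlgebraicClosure (ZMod p)) :=
  {x | x ^ p ^ m = x}

namespace Stmt14Aux

variable {p : ℕ} [Fact p.Prime]

local notation "K" => AlgebraicClosure (ZMod p)

lemma pow_pow (x : K) (m n : ℕ) : (x ^ p ^ m) ^ p ^ n = x ^ p ^ (m + n) := by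
  rw [← pow_mul, ← pow_add]

lemma fix_add {x : K} {n : ℕ} (hx : x ^ p ^ n = x) (s : ℕ) : x ^ p ^ (n + s) = x ^ p ^ s := by
  rw [← pow_pow, hx]

lemma fix_mul_add {x : K} {n : ℕ} (hx : x ^ p ^ n = x) (t r : ℕ) :
    x ^ p ^ (n * t + r) = x ^ p ^ r := by
  induction t with
  | zero => simp
  | succ t ih =>
    have h : n * (t + 1) + r = n + (n * t + r) := by ring
    rw [h, fix_add hx, ih]

lemma fix_mul {x : K} {d : ℕ} (hx : x ^ p ^ d = x) (i : ℕ) : x ^ p ^ (d * i) = x := by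
  simpa using fix_mul_add hx i 0

lemma fix_of_dvd {x : K} {d m : ℕ} (hx : x ^ p ^ d = x) (h : d ∣ m) : x ^ p ^ m = x := by
  obtain ⟨t, rfl⟩ := h; exact fix_mul hx t

lemma fix_pow {x : K} {n : ℕ} (hx : x ^ p ^ n = x) (m : ℕ) :
    (x ^ p ^ m) ^ p ^ n = x ^ p ^ m := by
  rw [pow_pow, add_comm, ← pow_pow, hx]

lemma sum_pow_p {ι : Type*} (s : Finset ι) (f : ι → K) (m : ℕ) :
    (∑ i ∈ s, f i) ^ p ^ m = ∑ i ∈ s, f i ^ p ^ m := by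
  simp_rw [← iterateFrobenius_def (R := K) (p := p), map_sum]

lemma sub_pow_p (x y : K) (m : ℕ) : (x - y) ^ p ^ m = x ^ p ^ m - y ^ p ^ m := by
  simp_rw [← iterateFrobenius_def (R := K) (p := p), map_sub]

lemma add_pow_p (x y : K) (m : ℕ) : (x + y) ^ p ^ m = x ^ p ^ m + y ^ p ^ m := by
  simp_rw [← iterateFrobenius_def (R := K) (p := p), map_add]

lemma cast_pow_p (t m : ℕ) : ((t : K)) ^ p ^ m = (t : K) := by
  rw [← iterateFrobenius_def (R := K) (p := p), map_natCast]

lemma inv_pow_p (x : K) (m : ℕ) : (x⁻¹) ^ p ^ m = (x ^ p ^ m)⁻¹ := by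
  rw [inv_pow]



lemma sum_shift {M : Type*} [AddCommGroup M] (h : ℕ → M) (m : ℕ) :
    ∑ i ∈ range m, h (i + 1) = ∑ i ∈ range m, h i + h m - h 0 := by
  rw [eq_sub_iff_add_eq, ← Finset.sum_range_succ' h m, Finset.sum_range_succ]

lemma sum_range_mul' {M : Type*} [AddCommMonoid M] (f : ℕ → M) (A B : ℕ) :
    ∑ i ∈ range (A * B), f i = ∑ j ∈ range A, ∑ s ∈ range B, f (j * B + s) := by
  induction A with
  | zero => simp
  | succ A ih =>
    rw [Finset.sum_range_succ, ← ih, Nat.succ_mul, Finset.sum_range_add]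

variable {p : ℕ} [Fact p.Prime]
local notation "K" => AlgebraicClosure (ZMod p)

lemma trace_fix {x : AlgebraicClosure (ZMod p)} {n d : ℕ} (hdn : d ∣ n) (hx : x ^ p ^ n = x) :
    (∑ i ∈ range (n / d), x ^ p ^ (d * i)) ^ p ^ d = ∑ i ∈ range (n / d), x ^ p ^ (d * i) := by
  rw [sum_pow_p]
  simp_rw [pow_pow]
  have h1 : ∀ i, d * i + d = d * (i + 1) := fun i => by ring
  simp_rw [h1]
  rw [sum_shift (fun i => x ^ p ^ (d * i)), Nat.mul_div_cancel' hdn, hx]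
  simp


lemma sum_range_zmod {M : Type*} [AddCommMonoid M] {N : ℕ} [NeZero N] (h : ZMod N → M) :
    ∑ i ∈ range N, h (i : ZMod N) = ∑ z : ZMod N, h z := by
  rw [← Fin.sum_univ_eq_sum_range (fun i => h (i : ZMod N)) N]
  apply Fintype.sum_bijective (fun i : Fin N => ((i : ℕ) : ZMod N)) ?_ _ _ (fun i => rfl)
  rw [Fintype.bijective_iff_injective_and_card]
  refine ⟨fun i j hij => ?_, by simp [ZMod.card]⟩
  have h2 := congrArg ZMod.val hij
  rw [ZMod.val_natCast, ZMod.val_natCast, Nat.mod_eq_of_lt i.isLt, Nat.mod_eq_of_lt j.isLt] at h2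
  exact Fin.ext h2

lemma reindex_gcd {x : AlgebraicClosure (ZMod p)} {n u : ℕ} (hn : 0 < n) (hu : 0 < u)
    (hx : x ^ p ^ n = x) :
    ∑ i ∈ range (n / Nat.gcd n u), x ^ p ^ (u * i)
      = ∑ i ∈ range (n / Nat.gcd n u), x ^ p ^ (Nat.gcd n u * i) := by
  set g := Nat.gcd n u with hgdef
  have hg0 : 0 < g := Nat.gcd_pos_of_pos_left u hn
  set N := n / g with hNdef
  have hgN : g * N = n := Nat.mul_div_cancel' (Nat.gcd_dvd_left n u)
  have hN0 : 0 < N := by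
    rcases Nat.eq_zero_or_pos N with h0 | h0
    · rw [h0, mul_zero] at hgN; omega
    · exact h0
  haveI : NeZero N := ⟨hN0.ne'⟩
  have hgu : g * (u / g) = u := Nat.mul_div_cancel' (Nat.gcd_dvd_right n u)
  have hcop : Nat.Coprime (u / g) N := (Nat.coprime_div_gcd_div_gcd hg0).symm
  set F : ZMod N → AlgebraicClosure (ZMod p) := fun z => x ^ p ^ (g * z.val) with hF
  have key : ∀ m : ℕ, x ^ p ^ (g * m) = F ((m : ZMod N)) := by
    intro m
    have h1 : g * m = n * (m / N) + g * (m % N) := by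
      conv_lhs => rw [← Nat.div_add_mod m N]
      rw [Nat.mul_add, ← mul_assoc, hgN]
    rw [h1, fix_mul_add hx]
    simp only [hF, ZMod.val_natCast]
  have hL : ∑ i ∈ range N, x ^ p ^ (u * i) = ∑ z : ZMod N, F (((u / g : ℕ) : ZMod N) * z) := by
    rw [← sum_range_zmod (fun z => F (((u / g : ℕ) : ZMod N) * z))]
    apply Finset.sum_congr rfl
    intro i _
    have h2 : u * i = g * (u / g * i) := by rw [← mul_assoc, hgu]
    rw [h2, key, Nat.cast_mul]
  have hR : ∑ i ∈ range N, x ^ p ^ (g * i) = ∑ z : ZMod N, F z := by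
    rw [← sum_range_zmod F]
    exact Finset.sum_congr rfl fun i _ => key i
  rw [hL, hR]
  have hw : ((ZMod.unitOfCoprime (u / g) hcop : (ZMod N)ˣ) : ZMod N) = ((u / g : ℕ) : ZMod N) :=
    ZMod.coe_unitOfCoprime _ _
  rw [← hw]
  exact (Units.mulLeft_bijective (ZMod.unitOfCoprime (u / g) hcop)).sum_comp F


lemma telescope {M : Type*} [CommRing M] (g c : ℕ → M) (m : ℕ) (hm : 0 < m)
    (hg : ∑ j ∈ range m, g j = 1) (hgm : g m = g 0) :
    ∑ i ∈ range (m - 1), ∑ j ∈ Finset.Ico (i + 1) m, g (j + 1) * c (i + 1)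
      = (∑ i ∈ range (m - 1), ∑ j ∈ Finset.Ico (i + 1) m, g j * c i)
        + g 0 * ∑ i ∈ range m, c i - c 0 := by
  set inner : ℕ → M := fun i => ∑ j ∈ Finset.Ico (i + 1) m, g j * c i with hinner
  -- Step A : LHS = ∑_{i ∈ Ico 1 m} ∑_{j ∈ Ico (i+1) (m+1)} g j * c i
  have stepA : ∑ i ∈ range (m - 1), ∑ j ∈ Finset.Ico (i + 1) m, g (j + 1) * c (i + 1)
      = ∑ i ∈ Finset.Ico 1 m, ∑ j ∈ Finset.Ico (i + 1) (m + 1), g j * c i := by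
    rw [Finset.sum_Ico_eq_sum_range]
    apply Finset.sum_congr rfl
    intro i _
    rw [Finset.sum_Ico_eq_sum_range, Finset.sum_Ico_eq_sum_range]
    have hr : m - (i + 1) = m + 1 - (1 + i + 1) := by omega
    rw [hr]
    apply Finset.sum_congr rfl
    intro t _
    have h1 : i + 1 + t + 1 = 1 + i + 1 + t := by omega
    have h2 : i + 1 = 1 + i := by omega
    rw [h1, h2]
  -- Step B
  have stepB : ∑ i ∈ Finset.Ico 1 m, ∑ j ∈ Finset.Ico (i + 1) (m + 1), g j * c i
      = (∑ i ∈ Finset.Ico 1 m, inner i) + g m * ∑ i ∈ Finset.Ico 1 m, c i := by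
    have h1 : ∀ i ∈ Finset.Ico 1 m, ∑ j ∈ Finset.Ico (i + 1) (m + 1), g j * c i
        = inner i + g m * c i := by
      intro i hi
      rw [Finset.mem_Ico] at hi
      rw [Finset.sum_Ico_succ_top (by omega : i + 1 ≤ m)]
    rw [Finset.sum_congr rfl h1, Finset.sum_add_distrib, Finset.mul_sum]
  -- Step C : ∑_{Ico 1 m} inner = ∑_{range (m-1)} inner - inner 0
  have stepC : ∑ i ∈ Finset.Ico 1 m, inner i
      = (∑ i ∈ range (m - 1), inner i) - inner 0 := by
    have hsplit : ∑ i ∈ Finset.Ico 0 m, inner i = inner 0 + ∑ i ∈ Finset.Ico 1 m, inner i :=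
      Finset.sum_eq_sum_Ico_succ_bot hm inner
    have h2 : ∑ i ∈ Finset.Ico 0 (m - 1), inner i + ∑ i ∈ Finset.Ico (m - 1) m, inner i
        = ∑ i ∈ Finset.Ico 0 m, inner i :=
      Finset.sum_Ico_consecutive _ (Nat.zero_le _) (Nat.sub_le m 1)
    have h3 : ∑ i ∈ Finset.Ico (m - 1) m, inner i = inner (m - 1) := by
      rw [Finset.sum_Ico_eq_sum_range]
      have h5 : m - (m - 1) = 1 := by omega
      rw [h5, Finset.sum_range_one, add_zero]
    have h4 : inner (m - 1) = 0 := by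
      have : (m - 1) + 1 = m := by omega
      rw [hinner]
      simp only [this, Finset.Ico_self, Finset.sum_empty]
    rw [← Finset.range_eq_Ico, ← Finset.range_eq_Ico] at h2
    rw [← Finset.range_eq_Ico] at hsplit
    rw [h3, h4, add_zero] at h2
    rw [← h2] at hsplit
    rw [eq_sub_iff_add_eq, add_comm, ← hsplit]
  -- Step D
  have stepD : inner 0 = (1 - g 0) * c 0 := by
    rw [hinner]
    simp only []
    rw [← Finset.sum_mul]
    congr 1
    have hsplit : ∑ j ∈ Finset.Ico 0 m, g j = g 0 + ∑ j ∈ Finset.Ico 1 m, g j :=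
      Finset.sum_eq_sum_Ico_succ_bot hm g
    rw [← Finset.range_eq_Ico, hg] at hsplit
    show ∑ j ∈ Finset.Ico 1 m, g j = 1 - g 0
    linear_combination -hsplit
  -- Step E
  have stepE : ∑ i ∈ Finset.Ico 1 m, c i = (∑ i ∈ range m, c i) - c 0 := by
    have hsplit : ∑ i ∈ Finset.Ico 0 m, c i = c 0 + ∑ i ∈ Finset.Ico 1 m, c i :=
      Finset.sum_eq_sum_Ico_succ_bot hm c
    rw [← Finset.range_eq_Ico] at hsplit
    linear_combination -hsplit
  rw [stepA, stepB, stepC, stepD, stepE, hgm]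
  ring


lemma exists_trace_ne_zero {n d : ℕ} (hn : 0 < n) (hd : 0 < d) (hdn : d ∣ n) :
    ∃ z : AlgebraicClosure (ZMod p), z ^ p ^ n = z ∧
      (∑ i ∈ range (n / d), z ^ p ^ (d * i)) ≠ 0 := by
  classical
  have hp1 : 1 < p := (Fact.out : p.Prime).one_lt
  by_contra hcon
  push_neg at hcon
  have hm1 : 1 ≤ n / d := (Nat.one_le_div_iff hd).mpr (Nat.le_of_dvd hn hdn)
  set q := p ^ n with hq
  have hq1 : 1 < q := Nat.one_lt_pow hn.ne' hp1
  set f : Polynomial K := Polynomial.X ^ q - Polynomial.X with hf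
  have hfsep : f.Separable := galois_poly_separable p q (dvd_pow_self p hn.ne')
  have hfdeg : f.natDegree = q := FiniteField.X_pow_card_pow_sub_X_natDegree_eq _ hn.ne' hp1
  have hf0 : f ≠ 0 := FiniteField.X_pow_card_pow_sub_X_ne_zero _ hn.ne' hp1
  have hsplits : f.Splits := IsAlgClosed.splits f
  have hcard : Multiset.card f.roots = q :=
    (Polynomial.splits_iff_card_roots.mp hsplits).trans hfdeg
  set P : Polynomial K := ∑ i ∈ range (n / d), Polynomial.X ^ (p ^ (d * i)) with hP
  have hPdeg : P.natDegree ≤ p ^ (d * (n / d - 1)) := by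
    apply Polynomial.natDegree_sum_le_of_forall_le
    intro i hi
    rw [Polynomial.natDegree_X_pow]
    exact Nat.pow_le_pow_right (Nat.one_le_of_lt hp1) (Nat.mul_le_mul_left d (by rw [Finset.mem_range] at hi; omega))
  have hP0 : P ≠ 0 := by
    intro h0
    have hc : P.coeff (p ^ (d * (n / d - 1))) = 1 := by
      rw [hP, Polynomial.finset_sum_coeff]
      simp_rw [Polynomial.coeff_X_pow]
      rw [Finset.sum_eq_single (n / d - 1)]
      · simp
      · intro i hi hne
        rw [if_neg]
        intro heq
        apply hne
        have := Nat.pow_right_injective hp1 heq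
        exact (Nat.eq_of_mul_eq_mul_left hd this).symm
      · intro h
        exact absurd (Finset.mem_range.mpr (by omega)) h
    rw [h0] at hc
    simp at hc
  have hsub : f.roots.toFinset ⊆ P.roots.toFinset := by
    intro z hz
    rw [Multiset.mem_toFinset, Polynomial.mem_roots'] at hz ⊢
    obtain ⟨-, hz⟩ := hz
    have hzq : z ^ q = z := by
      have h2 : z ^ q - z = 0 := by
        have := hz
        rw [hf] at this
        simpa [Polynomial.IsRoot] using this
      linear_combination h2
    refine ⟨hP0, ?_⟩
    have := hcon z hzq
    rw [hP]
    simp [Polynomial.IsRoot, Polynomial.eval_finset_sum]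
    exact this
  have hnodup : f.roots.Nodup := Polynomial.nodup_roots hfsep
  have hc1 : q ≤ Multiset.card P.roots := by
    calc q = f.roots.toFinset.card := by
              rw [Multiset.toFinset_card_of_nodup hnodup, hcard]
    _ ≤ P.roots.toFinset.card := Finset.card_le_card hsub
    _ ≤ Multiset.card P.roots := Multiset.toFinset_card_le _
  have hc2 : Multiset.card P.roots ≤ p ^ (d * (n / d - 1)) :=
    le_trans (Polynomial.card_roots' P) hPdeg
  have hlt : p ^ (d * (n / d - 1)) < q := by
    apply Nat.pow_lt_pow_right hp1
    have h1 : d * (n / d) = n := Nat.mul_div_cancel' hdn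
    obtain ⟨m', hm'⟩ : ∃ m', n / d = m' + 1 := ⟨n / d - 1, by omega⟩
    rw [hm'] at h1 ⊢
    simp only [Nat.add_sub_cancel]
    rw [Nat.mul_add, mul_one] at h1
    omega
  omega

lemma exists_trace_one {n d : ℕ} (hn : 0 < n) (hd : 0 < d) (hdn : d ∣ n) :
    ∃ δ : AlgebraicClosure (ZMod p), δ ^ p ^ n = δ ∧
      (∑ i ∈ range (n / d), δ ^ p ^ (d * i)) = 1 := by
  obtain ⟨z, hzF, hzT⟩ := exists_trace_ne_zero (p := p) hn hd hdn
  set s := ∑ i ∈ range (n / d), z ^ p ^ (d * i) with hs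
  have hsF : s ^ p ^ d = s := trace_fix hdn hzF
  have hsn : s ^ p ^ n = s := fix_of_dvd hsF hdn
  refine ⟨z * s⁻¹, ?_, ?_⟩
  · rw [mul_pow, hzF, inv_pow, hsn]
  · have hterm : ∀ i : ℕ, (z * s⁻¹) ^ p ^ (d * i) = z ^ p ^ (d * i) * s⁻¹ := by
      intro i
      rw [mul_pow, inv_pow, fix_mul hsF i]
    simp_rw [hterm]
    rw [← Finset.sum_mul, ← hs]
    exact mul_inv_cancel₀ hzT

end Stmt14Aux


open Stmt14Aux in
theorem stmt14 (p : ℕ) [Fact p.Prime] (n k l : ℕ) (hn : 0 < n) (hk : 0 < k) (hl : 0 < l)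
    (hlk : l ∣ k) (d e L : ℕ)
    (hd : d = Nat.gcd n k) (he : e = Nat.gcd n l) (hL : L = Nat.lcm d l)
    (hpk : ¬ p ∣ k / L) (a : AlgebraicClosure (ZMod p)) (ha : a ∈ Ffield p n) :
    ((∃ x ∈ Ffield p n, Tmap p l k x = a) ↔ Smap p e (2 * e) (Tmap p d n a) = 0) ∧
    (Smap p e (2 * e) (Tmap p d n a) = 0 →
      ∀ δ ∈ Ffield p n, Tmap p d n δ = 1 →
      ∀ δ₁ ∈ Ffield p d, Tmap p e d δ₁ = 1 →
      ∀ y₀, y₀ = ∑ i ∈ Finset.range (n / d - 1), ∑ j ∈ Finset.Ico (i + 1) (n / d),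
          δ ^ p ^ (k * j) * (Smap p l (2 * l) a) ^ p ^ (k * i) →
      ∀ x₀, x₀ = y₀ + (((k / L : ℕ) : AlgebraicClosure (ZMod p)))⁻¹ *
          (a - Tmap p l k y₀) * δ₁ →
        x₀ ∈ Ffield p n ∧ Tmap p l k x₀ = a) := by
  have haF : a ^ p ^ n = a := ha
  -- arithmetic facts
  have hd0 : 0 < d := hd ▸ Nat.gcd_pos_of_pos_left k hn
  have hdn : d ∣ n := hd ▸ Nat.gcd_dvd_left n k
  have hdk : d ∣ k := hd ▸ Nat.gcd_dvd_right n k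
  have he0 : 0 < e := he ▸ Nat.gcd_pos_of_pos_left l hn
  have hen : e ∣ n := he ▸ Nat.gcd_dvd_left n l
  have hel : e ∣ l := he ▸ Nat.gcd_dvd_right n l
  have hed : e ∣ d := hd ▸ Nat.dvd_gcd hen (hel.trans hlk)
  have hlL : l ∣ L := hL ▸ Nat.dvd_lcm_right d l
  have hdL : d ∣ L := hL ▸ Nat.dvd_lcm_left d l
  have hLk : L ∣ k := hL ▸ Nat.lcm_dvd hdk hlk
  have hL0 : 0 < L := Nat.pos_of_dvd_of_pos hLk hk
  have hgdl : Nat.gcd d l = e := by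
    apply Nat.dvd_antisymm
    · rw [he]; exact Nat.dvd_gcd ((Nat.gcd_dvd_left d l).trans hdn) (Nat.gcd_dvd_right d l)
    · exact Nat.dvd_gcd hed hel
  have hεL : e * L = d * l := by
    have h0 := Nat.gcd_mul_lcm d l
    rw [hgdl, ← hL] at h0
    exact h0
  have hLdl : L = (d / e) * l := by
    apply Nat.eq_of_mul_eq_mul_left he0
    rw [hεL, ← mul_assoc, Nat.mul_div_cancel' hed]
  have hLl : L / l = d / e := by rw [hLdl, Nat.mul_div_cancel _ hl]
  have hkl : k / l = (k / L) * (L / l) := by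
    obtain ⟨t, htk⟩ := hLk
    rw [htk, Nat.mul_div_cancel_left _ hL0, mul_comm L t, Nat.mul_div_assoc t hlL,
      mul_comm t (L / l)]
  have hm1 : 1 ≤ n / d := (Nat.one_le_div_iff hd0).mpr (Nat.le_of_dvd hn hdn)
  -- Smap expansion
  have hSmap : ∀ (u : ℕ), 0 < u → ∀ x : AlgebraicClosure (ZMod p),
      Smap p u (2 * u) x = x - x ^ p ^ u := by
    intro u hu x
    rw [Smap, Nat.mul_div_cancel _ hu, Finset.sum_range_succ, Finset.sum_range_one]
    simp
    ring
  -- Tmap of an element of F_{p^d}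
  have hTlk : ∀ w : AlgebraicClosure (ZMod p), w ^ p ^ d = w →
      Tmap p l k w = ((k / L : ℕ) : AlgebraicClosure (ZMod p)) * Tmap p e d w := by
    intro w hw
    rw [Tmap, hkl, sum_range_mul']
    have hlLl : l * (L / l) = L := Nat.mul_div_cancel' hlL
    have hterm : ∀ j s : ℕ, w ^ p ^ (l * (j * (L / l) + s)) = w ^ p ^ (l * s) := by
      intro j s
      have h1 : l * (j * (L / l) + s) = L * j + l * s := by
        rw [Nat.mul_add]
        congr 1
        rw [mul_comm j (L / l), ← mul_assoc, hlLl]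
      have h2 : L * j = d * ((L / d) * j) := by
        rw [← mul_assoc, Nat.mul_div_cancel' hdL]
      rw [h1, ← pow_pow, h2, fix_mul hw]
    simp_rw [hterm]
    rw [Finset.sum_const, Finset.card_range, nsmul_eq_mul]
    congr 1
    rw [hLl]
    simp only [Tmap]
    rw [← hgdl]
    exact reindex_gcd hd0 hl hw
  -- commutation of Tmap p d n and Tmap p l k
  have hcomm : ∀ x : AlgebraicClosure (ZMod p),
      Tmap p d n (Tmap p l k x) = Tmap p l k (Tmap p d n x) := by
    intro x
    rw [Tmap, Tmap, Tmap, Tmap]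
    simp_rw [sum_pow_p, pow_pow]
    rw [Finset.sum_comm]
    apply Finset.sum_congr rfl
    intro i _
    apply Finset.sum_congr rfl
    intro j _
    rw [Nat.add_comm]
  -- the "A" element
  set A := Tmap p d n a with hA
  have hAsum : A = ∑ i ∈ Finset.range (n / d), a ^ p ^ (d * i) := rfl
  have hAd : A ^ p ^ d = A := by rw [hAsum]; exact trace_fix hdn haF
  -- forward direction
  have hdir1 : ∀ x : AlgebraicClosure (ZMod p), x ^ p ^ n = x → Tmap p l k x = a →
      Smap p e (2 * e) A = 0 := by
    intro x hxF hxa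
    have hu0 : (Tmap p d n x) ^ p ^ d = Tmap p d n x := trace_fix hdn hxF
    have h1 : A = ((k / L : ℕ) : AlgebraicClosure (ZMod p)) * Tmap p e d (Tmap p d n x) := by
      rw [hA, ← hxa, hcomm, hTlk _ hu0]
    have hv : (Tmap p e d (Tmap p d n x)) ^ p ^ e = Tmap p e d (Tmap p d n x) :=
      trace_fix hed hu0
    rw [hSmap e he0, h1, sub_eq_zero, mul_pow, hv, cast_pow_p]
  -- MAIN PART 2
  have hpart2 : Smap p e (2 * e) A = 0 →
      ∀ δ ∈ Ffield p n, Tmap p d n δ = 1 →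
      ∀ δ₁ ∈ Ffield p d, Tmap p e d δ₁ = 1 →
      ∀ y₀, y₀ = ∑ i ∈ Finset.range (n / d - 1), ∑ j ∈ Finset.Ico (i + 1) (n / d),
          δ ^ p ^ (k * j) * (Smap p l (2 * l) a) ^ p ^ (k * i) →
      ∀ x₀, x₀ = y₀ + (((k / L : ℕ) : AlgebraicClosure (ZMod p)))⁻¹ *
          (a - Tmap p l k y₀) * δ₁ →
        x₀ ∈ Ffield p n ∧ Tmap p l k x₀ = a := by
    intro hS δ hδF' hδT δ₁ hδ₁F' hδ₁T y₀ hy₀ x₀ hx₀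
    have hδF : δ ^ p ^ n = δ := hδF'
    have hδ₁F : δ₁ ^ p ^ d = δ₁ := hδ₁F'
    have hAe : A ^ p ^ e = A := by
      rw [hSmap e he0] at hS
      exact (sub_eq_zero.mp hS).symm
    have hAl : A ^ p ^ l = A := fix_of_dvd hAe hel
    set c := a - a ^ p ^ l with hc
    have hSc : Smap p l (2 * l) a = c := hSmap l hl a
    have hcF : c ^ p ^ n = c := by
      rw [hc, sub_pow_p, haF, fix_pow haF l]
    have hTc : ∑ i ∈ Finset.range (n / d), c ^ p ^ (d * i) = 0 := by
      have h2 : ∑ i ∈ Finset.range (n / d), c ^ p ^ (d * i) = A - A ^ p ^ l := by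
        rw [hc]
        simp_rw [sub_pow_p]
        rw [Finset.sum_sub_distrib]
        congr 1
        rw [hAsum, sum_pow_p]
        apply Finset.sum_congr rfl
        intro i _
        rw [pow_pow, pow_pow, Nat.add_comm]
      rw [h2, hAl, sub_self]
    have hTσc : ∑ i ∈ Finset.range (n / d), c ^ p ^ (k * i) = 0 := by
      have h3 := reindex_gcd (n := n) (u := k) hn hk hcF
      rw [← hd] at h3
      exact h3.trans hTc
    have hTσδ : ∑ j ∈ Finset.range (n / d), δ ^ p ^ (k * j) = 1 := by
      have h3 := reindex_gcd (n := n) (u := k) hn hk hδF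
      rw [← hd] at h3
      rw [h3]
      exact hδT
    have hgm0 : δ ^ p ^ (k * (n / d)) = δ ^ p ^ (k * 0) := by
      have h4 : n ∣ k * (n / d) := by
        obtain ⟨t, ht⟩ := hdk
        refine ⟨t, ?_⟩
        rw [ht]
        rw [mul_comm d t, mul_assoc, Nat.mul_div_cancel' hdn, mul_comm]
      rw [fix_of_dvd hδF h4, mul_zero, pow_zero, pow_one]
    -- telescope
    have hy0k : y₀ ^ p ^ k = y₀ - c := by
      have hfr : y₀ ^ p ^ k = ∑ i ∈ Finset.range (n / d - 1), ∑ j ∈ Finset.Ico (i + 1) (n / d),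
          δ ^ p ^ (k * (j + 1)) * c ^ p ^ (k * (i + 1)) := by
        rw [hy₀, hSc, sum_pow_p]
        apply Finset.sum_congr rfl
        intro i _
        rw [sum_pow_p]
        apply Finset.sum_congr rfl
        intro j _
        rw [mul_pow, pow_pow, pow_pow]
        congr 2 <;> ring
      rw [hfr, telescope (fun j => δ ^ p ^ (k * j)) (fun i => c ^ p ^ (k * i)) (n / d)
        (by omega) hTσδ hgm0, hTσc]
      simp only [mul_zero, pow_zero, pow_one, add_zero]
      rw [← hSc, ← hy₀]
    have hy0F : y₀ ^ p ^ n = y₀ := by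
      rw [hy₀, sum_pow_p]
      apply Finset.sum_congr rfl
      intro i _
      rw [sum_pow_p]
      apply Finset.sum_congr rfl
      intro j _
      rw [mul_pow, fix_pow hδF, fix_pow (hSc ▸ hcF)]
    have hTy : (Tmap p l k y₀) ^ p ^ l = Tmap p l k y₀ - c := by
      simp only [Tmap]
      rw [sum_pow_p]
      simp_rw [pow_pow]
      have h5 : ∀ i : ℕ, l * i + l = l * (i + 1) := fun i => by ring
      simp_rw [h5]
      rw [sum_shift (fun i => y₀ ^ p ^ (l * i)), Nat.mul_div_cancel' hlk, hy0k]
      simp only [mul_zero, pow_zero, pow_one]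
      ring
    set b := a - Tmap p l k y₀ with hb
    have hbl : b ^ p ^ l = b := by
      rw [hb, sub_pow_p, hTy]
      have h6 : a ^ p ^ l = a - c := by rw [hc]; ring
      rw [h6]
      ring
    have hTyF : (Tmap p l k y₀) ^ p ^ n = Tmap p l k y₀ := by
      simp only [Tmap]
      rw [sum_pow_p]
      exact Finset.sum_congr rfl fun i _ => fix_pow hy0F _
    have hbF : b ^ p ^ n = b := by rw [hb, sub_pow_p, haF, hTyF]
    set t := (((k / L : ℕ) : AlgebraicClosure (ZMod p)))⁻¹ with ht
    have htcast : ((k / L : ℕ) : AlgebraicClosure (ZMod p)) ≠ 0 := by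
      rw [Ne, CharP.cast_eq_zero_iff _ p]
      exact hpk
    have htfix : ∀ m : ℕ, t ^ p ^ m = t := by
      intro m
      rw [ht, inv_pow, cast_pow_p]
    have hδ₁n : δ₁ ^ p ^ n = δ₁ := fix_of_dvd hδ₁F hdn
    have hTb : Tmap p l k (t * b * δ₁) = b := by
      simp only [Tmap]
      have hterm : ∀ i : ℕ, (t * b * δ₁) ^ p ^ (l * i) = t * b * δ₁ ^ p ^ (l * i) := by
        intro i
        rw [mul_pow, mul_pow, htfix, fix_mul hbl]
      simp_rw [hterm]
      rw [← Finset.mul_sum]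
      have h7 : ∑ i ∈ Finset.range (k / l), δ₁ ^ p ^ (l * i) = Tmap p l k δ₁ := rfl
      rw [h7, hTlk δ₁ hδ₁F, hδ₁T, mul_one, ht]
      field_simp
    have hTadd : Tmap p l k x₀ = Tmap p l k y₀ + Tmap p l k (t * b * δ₁) := by
      rw [hx₀]
      simp only [Tmap]
      rw [← Finset.sum_add_distrib]
      exact Finset.sum_congr rfl fun i _ => add_pow_p _ _ _
    constructor
    · show x₀ ^ p ^ n = x₀
      rw [hx₀, add_pow_p, mul_pow, mul_pow, hy0F, htfix, hbF, hδ₁n]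
    · rw [hTadd, hTb, hb]
      ring
  refine ⟨⟨fun ⟨x, hxF, hxa⟩ => hdir1 x hxF hxa, fun hS => ?_⟩, hpart2⟩
  obtain ⟨δ, hδF, hδT⟩ := exists_trace_one (p := p) hn hd0 hdn
  obtain ⟨δ₁, hδ₁F, hδ₁T⟩ := exists_trace_one (p := p) hd0 he0 hed
  have h8 := hpart2 hS δ hδF hδT δ₁ hδ₁F hδ₁T _ rfl _ rfl
  exact ⟨_, h8.1, h8.2⟩
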